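/- arXiv:1006.1485 — 5 statements merged into one kernel-verified Lean document; each statement's English description precedes it below -/
import Mathlib

section
/- Assume d ≥ 1 and 2 + 4/d < p + 1 < 2*. Then the variational values satisfy N₃ = (d(p−1)/(2(p+1))) · N₂, where N₂ = inf { ‖f‖_{L²}^{p+1−d(p−1)/2} ‖∇f‖_{L²}^{d(p−1)/2 − 2} : f ∈ H¹(ℝᵈ)\{0}, 𝒦(f) ≤ 0 } and N₃ = inf { ‖f‖_{L²}^{p+1−d(p−1)/2} ‖∇f‖_{L²}^{d(p−1)/2} / ‖f‖_{L^{p+1}}^{p+1} : f ∈ H¹(ℝᵈ)\{0} }. -/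
open MeasureTheory Filter Set
open scoped ENNReal Topology

noncomputable section

abbrev Euc (d : ℕ) := EuclideanSpace ℝ (Fin d)

/-- `‖∇f‖_{L²}²`. -/
def gradSq (d : ℕ) (f : Euc d → ℂ) : ℝ := ∫ x, ‖fderiv ℝ f x‖ ^ 2

/-- `‖f‖_{L^q}^q`. -/
def ppow (d : ℕ) (q : ℝ) (f : Euc d → ℂ) : ℝ := ∫ x, ‖f x‖ ^ q

/-- `‖f‖_{L²}`. -/
def l2norm (d : ℕ) (f : Euc d → ℂ) : ℝ := Real.sqrt (ppow d 2 f)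

/-- Membership in `H¹(ℝᵈ)`, modelled with classical derivatives. -/
def InH1 (d : ℕ) (f : Euc d → ℂ) : Prop :=
  MemLp f 2 (volume : Measure (Euc d)) ∧ Differentiable ℝ f ∧
    Integrable (fun x => ‖fderiv ℝ f x‖ ^ 2) (volume : Measure (Euc d))

/-- `𝒦(f) = ‖∇f‖² − (d(p−1)/(2(p+1)))‖f‖_{p+1}^{p+1}`. -/
def Kfun (d : ℕ) (p : ℝ) (f : Euc d → ℂ) : ℝ :=
  gradSq d f - ((d : ℝ) * (p - 1) / (2 * (p + 1))) * ppow d (p + 1) f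

/-- Admissible (nonzero `H¹`) functions. -/
def Adm (d : ℕ) (p : ℝ) (f : Euc d → ℂ) : Prop :=
  InH1 d f ∧ MemLp f (ENNReal.ofReal (p + 1)) (volume : Measure (Euc d)) ∧
    ¬ (f =ᵐ[(volume : Measure (Euc d))] (0 : Euc d → ℂ))

/-- `𝒩₂(f) = ‖f‖_{L²}^{p+1−d(p−1)/2} ‖∇f‖_{L²}^{d(p−1)/2−2}`. -/
def N2fun (d : ℕ) (p : ℝ) (f : Euc d → ℂ) : ℝ :=
  l2norm d f ^ (p + 1 - (d : ℝ) * (p - 1) / 2) *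
    Real.sqrt (gradSq d f) ^ ((d : ℝ) * (p - 1) / 2 - 2)

/-- `𝓘(f) = ‖f‖_{L²}^{p+1−d(p−1)/2} ‖∇f‖_{L²}^{d(p−1)/2} / ‖f‖_{L^{p+1}}^{p+1}`. -/
def Ifun (d : ℕ) (p : ℝ) (f : Euc d → ℂ) : ℝ :=
  l2norm d f ^ (p + 1 - (d : ℝ) * (p - 1) / 2) *
    Real.sqrt (gradSq d f) ^ ((d : ℝ) * (p - 1) / 2) / ppow d (p + 1) f

/-- `N₂ = inf { 𝒩₂(f) : f ∈ H¹\{0}, 𝒦(f) ≤ 0 }`. -/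
def N2val (d : ℕ) (p : ℝ) : ℝ :=
  sInf {r : ℝ | ∃ f : Euc d → ℂ, Adm d p f ∧ Kfun d p f ≤ 0 ∧ r = N2fun d p f}

/-- `N₃ = inf { 𝓘(f) : f ∈ H¹\{0} }`. -/
def N3val (d : ℕ) (p : ℝ) : ℝ :=
  sInf {r : ℝ | ∃ f : Euc d → ℂ, Adm d p f ∧ r = Ifun d p f}

/-! ### Auxiliary lemmas -/

section Aux

set_option maxHeartbeats 1000000

lemma ppow_nonneg' (d : ℕ) (q : ℝ) (f : Euc d → ℂ) : 0 ≤ ppow d q f :=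
  integral_nonneg fun _ => Real.rpow_nonneg (norm_nonneg _) _

lemma gradSq_nonneg' (d : ℕ) (f : Euc d → ℂ) : 0 ≤ gradSq d f :=
  integral_nonneg fun x => by positivity

lemma ppow_pos' (d : ℕ) (q : ℝ) (hq : 0 < q) (f : Euc d → ℂ)
    (hm : MemLp f (ENNReal.ofReal q) (volume : Measure (Euc d)))
    (hne : ¬ (f =ᵐ[(volume : Measure (Euc d))] (0 : Euc d → ℂ))) :
    0 < ppow d q f := by
  have hint : Integrable (fun x => ‖f x‖ ^ q) (volume : Measure (Euc d)) := by
    have := hm.integrable_norm_rpow (by simp [hq]) (by simp)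
    simpa [ENNReal.toReal_ofReal hq.le] using this
  rcases (ppow_nonneg' d q f).lt_or_eq with h | h
  · exact h
  · exfalso
    apply hne
    have h0 : (fun x => ‖f x‖ ^ q) =ᵐ[(volume : Measure (Euc d))] 0 :=
      (integral_eq_zero_iff_of_nonneg (fun x => Real.rpow_nonneg (norm_nonneg _) _) hint).1
        h.symm
    filter_upwards [h0] with x hx
    have : ‖f x‖ = 0 := (Real.rpow_eq_zero (norm_nonneg _) hq.ne').1 hx
    simpa using this

lemma ppow_smul' (d : ℕ) (q : ℝ) (c : ℝ) (hc : 0 ≤ c) (f : Euc d → ℂ) :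
    ppow d q (fun x => (c : ℂ) * f x) = c ^ q * ppow d q f := by
  unfold ppow
  rw [← integral_const_mul]
  congr 1 with x
  rw [norm_mul, Complex.norm_real, Real.norm_of_nonneg hc,
    Real.mul_rpow hc (norm_nonneg _)]

lemma fderiv_cmul' (d : ℕ) (c : ℂ) (f : Euc d → ℂ) (hf : Differentiable ℝ f) (x : Euc d) :
    fderiv ℝ (fun y => c * f y) x = c • fderiv ℝ f x :=
  fderiv_const_mul (hf x) c

lemma norm_fderiv_cmul' (d : ℕ) (c : ℝ) (hc : 0 ≤ c) (f : Euc d → ℂ)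
    (hf : Differentiable ℝ f) (x : Euc d) :
    ‖fderiv ℝ (fun y => (c : ℂ) * f y) x‖ ^ 2 = c ^ 2 * ‖fderiv ℝ f x‖ ^ 2 := by
  rw [fderiv_cmul' d _ f hf x]
  have h1 : (c : ℂ) • fderiv ℝ f x = c • fderiv ℝ f x :=
    ContinuousLinearMap.ext fun v => by simp [Complex.real_smul]
  rw [h1]
  have h2 : ‖c • fderiv ℝ f x‖ = ‖c‖ * ‖fderiv ℝ f x‖ := norm_smul c (fderiv ℝ f x)
  rw [h2, Real.norm_of_nonneg hc, mul_pow]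

lemma gradSq_smul' (d : ℕ) (c : ℝ) (hc : 0 ≤ c) (f : Euc d → ℂ)
    (hf : Differentiable ℝ f) :
    gradSq d (fun x => (c : ℂ) * f x) = c ^ (2:ℝ) * gradSq d f := by
  unfold gradSq
  rw [show (c:ℝ) ^ (2:ℝ) = c ^ (2:ℕ) by
    rw [show ((2:ℝ)) = ((2:ℕ):ℝ) by norm_num, Real.rpow_natCast]]
  rw [← integral_const_mul]
  congr 1 with x
  exact norm_fderiv_cmul' d c hc f hf x

lemma adm_smul' (d : ℕ) (p : ℝ) (c : ℝ) (hc : 0 < c) (f : Euc d → ℂ)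
    (hf : Adm d p f) : Adm d p (fun x => (c : ℂ) * f x) := by
  obtain ⟨⟨hL2, hdiff, hint⟩, hLp, hne⟩ := hf
  refine ⟨⟨hL2.const_mul _, hdiff.const_mul _, ?_⟩, hLp.const_mul _, ?_⟩
  · have heq : (fun x => ‖fderiv ℝ (fun y => (c:ℂ) * f y) x‖ ^ 2)
        = fun x => c ^ 2 * ‖fderiv ℝ f x‖ ^ 2 := by
      funext x; exact norm_fderiv_cmul' d c hc.le f hdiff x
    rw [heq]
    exact hint.const_mul _
  · intro h
    apply hne
    filter_upwards [h] with x hx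
    simp only [Pi.zero_apply] at hx ⊢
    rcases mul_eq_zero.1 hx with h' | h'
    · exact absurd h' (by exact_mod_cast hc.ne')
    · exact h'

lemma adm_exists' (d : ℕ) (p : ℝ) : ∃ f : Euc d → ℂ, Adm d p f := by
  obtain ⟨φ⟩ : Nonempty (ContDiffBump (0 : Euc d)) := ⟨⟨1, 2, one_pos, one_lt_two⟩⟩
  set f : Euc d → ℂ := fun x => (φ x : ℂ) with hf
  have hcont : Continuous f := Complex.continuous_ofReal.comp φ.continuous
  have hsupp : HasCompactSupport f := by
    have : f = Complex.ofReal ∘ φ := rfl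
    rw [this]
    exact HasCompactSupport.comp_left φ.hasCompactSupport (by simp)
  have hsmooth : ContDiff ℝ ((⊤ : ℕ∞) : WithTop ℕ∞) f :=
    Complex.ofRealCLM.contDiff.comp φ.contDiff
  have hdiff : Differentiable ℝ f := hsmooth.differentiable (by norm_num)
  refine ⟨f, ⟨hcont.memLp_of_hasCompactSupport hsupp, hdiff, ?_⟩,
    hcont.memLp_of_hasCompactSupport hsupp, ?_⟩
  · have hder : Continuous fun x => fderiv ℝ f x := hsmooth.continuous_fderiv (by norm_num)
    have hcs : HasCompactSupport fun x => fderiv ℝ f x := hsupp.fderiv (𝕜 := ℝ)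
    have : HasCompactSupport fun x => ‖fderiv ℝ f x‖ ^ 2 := by
      apply hcs.comp_left (g := fun y : Euc d →L[ℝ] ℂ => ‖y‖ ^ 2)
      simp
    exact ((hder.norm.pow 2)).integrable_of_hasCompactSupport this
  · intro h
    have hball : (volume : Measure (Euc d)) (Metric.ball 0 φ.rIn) > 0 :=
      Metric.measure_ball_pos _ _ φ.rIn_pos
    have hsub : Metric.ball (0 : Euc d) φ.rIn ⊆ {x | f x ≠ 0} := by
      intro x hx
      simp only [mem_setOf_eq, hf, ne_eq, Complex.ofReal_eq_zero]
      have : x ∈ Metric.ball (0 : Euc d) φ.rOut :=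
        Metric.ball_subset_ball φ.rIn_lt_rOut.le hx
      exact (φ.pos_of_mem_ball this).ne'
    have h0 : (volume : Measure (Euc d)) {x | f x ≠ 0} = 0 := by
      rw [EventuallyEq, ae_iff] at h
      simpa using h
    exact absurd (measure_mono_null hsub h0) hball.ne'

lemma sqrt_rpow_split' (G m : ℝ) (hG : 0 ≤ G) (hm : 2 < m) :
    Real.sqrt G ^ m = Real.sqrt G ^ (m - 2) * G := by
  rcases hG.lt_or_eq with h | h
  · have hs : 0 < Real.sqrt G := Real.sqrt_pos.2 h
    have h1 : Real.sqrt G ^ m = Real.sqrt G ^ (m - 2) * Real.sqrt G ^ (2:ℝ) := by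
      rw [← Real.rpow_add hs]; ring_nf
    have h2 : Real.sqrt G ^ (2:ℝ) = G := by
      rw [show (2:ℝ) = ((2:ℕ):ℝ) by norm_num, Real.rpow_natCast, Real.sq_sqrt hG]
    rw [h1, h2]
  · rw [← h, Real.sqrt_zero, Real.zero_rpow (by linarith), Real.zero_rpow (by linarith),
      zero_mul]

lemma N2fun_nonneg' (d : ℕ) (p : ℝ) (f : Euc d → ℂ) : 0 ≤ N2fun d p f :=
  mul_nonneg (Real.rpow_nonneg (Real.sqrt_nonneg _) _)
    (Real.rpow_nonneg (Real.sqrt_nonneg _) _)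

lemma Ifun_nonneg' (d : ℕ) (p : ℝ) (f : Euc d → ℂ) : 0 ≤ Ifun d p f :=
  div_nonneg (mul_nonneg (Real.rpow_nonneg (Real.sqrt_nonneg _) _)
    (Real.rpow_nonneg (Real.sqrt_nonneg _) _)) (ppow_nonneg' _ _ _)

lemma Ifun_eq' (d : ℕ) (p : ℝ) (f : Euc d → ℂ) (hm : 2 < (d : ℝ) * (p - 1) / 2) :
    Ifun d p f = N2fun d p f * gradSq d f / ppow d (p + 1) f := by
  unfold Ifun N2fun
  rw [sqrt_rpow_split' (gradSq d f) _ (gradSq_nonneg' d f) hm]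
  ring

end Aux

/-- `N₃ = (d(p−1)/(2(p+1))) · N₂`. -/
theorem N3_eq_N2 (d : ℕ) (p : ℝ) (hd : 1 ≤ d)
    (hp1 : 2 + 4 / (d : ℝ) < p + 1)
    (hp2 : 3 ≤ d → p + 1 < 2 * (d : ℝ) / ((d : ℝ) - 2)) :
    N3val d p = ((d : ℝ) * (p - 1) / (2 * (p + 1))) * N2val d p := by
  have hd0 : (0:ℝ) < d := by exact_mod_cast Nat.pos_of_ne_zero (by omega)
  have hd1 : (1:ℝ) ≤ d := by exact_mod_cast hd
  have h4d : (0:ℝ) < 4 / d := by positivity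
  have hp : 1 < p := by linarith
  set κ : ℝ := (d : ℝ) * (p - 1) / (2 * (p + 1)) with hκdef
  have hκ : 0 < κ := by
    apply div_pos (mul_pos hd0 (by linarith)) (by linarith)
  set m : ℝ := (d : ℝ) * (p - 1) / 2 with hmdef
  have hm2 : 2 < m := by
    have h1 : 4 / (d:ℝ) < p - 1 := by linarith
    have h2 : 4 < (p - 1) * d := (div_lt_iff₀ hd0).1 h1
    rw [hmdef]; rw [lt_div_iff₀ (by norm_num : (0:ℝ) < 2)]; nlinarith
  set S2 : Set ℝ :=
    {r : ℝ | ∃ f : Euc d → ℂ, Adm d p f ∧ Kfun d p f ≤ 0 ∧ r = N2fun d p f} with hS2def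
  set S3 : Set ℝ := {r : ℝ | ∃ f : Euc d → ℂ, Adm d p f ∧ r = Ifun d p f} with hS3def
  have hN2 : N2val d p = sInf S2 := rfl
  have hN3 : N3val d p = sInf S3 := rfl
  have hS3bdd : BddBelow S3 := by
    refine ⟨0, fun r hr => ?_⟩
    obtain ⟨f, _, rfl⟩ := hr
    exact Ifun_nonneg' d p f
  have hS2bdd : BddBelow S2 := by
    refine ⟨0, fun r hr => ?_⟩
    obtain ⟨f, _, _, rfl⟩ := hr
    exact N2fun_nonneg' d p f
  -- positivity facts for admissible functions
  have hPpos : ∀ f : Euc d → ℂ, Adm d p f → 0 < ppow d (p+1) f := by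
    intro f hf
    exact ppow_pos' d (p+1) (by linarith) f hf.2.1 hf.2.2
  have hL2pos : ∀ f : Euc d → ℂ, Adm d p f → 0 < ppow d 2 f := by
    intro f hf
    refine ppow_pos' d 2 (by norm_num) f ?_ hf.2.2
    have := hf.1.1
    convert this using 2
    norm_num
  -- the scaling construction
  have scale : ∀ f : Euc d → ℂ, Adm d p f → 0 < gradSq d f →
      ∃ g : Euc d → ℂ, Adm d p g ∧ Kfun d p g = 0 ∧ Ifun d p g = Ifun d p f := by
    intro f hf hG
    set G := gradSq d f with hGdef
    set P := ppow d (p+1) f with hPdef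
    have hP : 0 < P := hPpos f hf
    set X : ℝ := G / (κ * P) with hXdef
    have hX : 0 < X := div_pos hG (mul_pos hκ hP)
    set c : ℝ := X ^ ((1:ℝ) / (p - 1)) with hcdef
    have hc : 0 < c := Real.rpow_pos_of_pos hX _
    have hcp : c ^ (p - 1) = X := by
      rw [hcdef, ← Real.rpow_mul hX.le, one_div_mul_cancel (sub_ne_zero.mpr hp.ne'),
        Real.rpow_one]
    have hGg : gradSq d (fun x => (c:ℂ) * f x) = c ^ (2:ℝ) * G :=
      gradSq_smul' d c hc.le f hf.1.2.1
    have hPg : ppow d (p+1) (fun x => (c:ℂ) * f x) = c ^ (p+1) * P :=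
      ppow_smul' d (p+1) c hc.le f
    have hsplit : c ^ (p+1) = c ^ (2:ℝ) * c ^ (p-1) := by
      rw [← Real.rpow_add hc]; ring_nf
    refine ⟨fun x => (c : ℂ) * f x, adm_smul' d p c hc f hf, ?_, ?_⟩
    · unfold Kfun
      rw [hGg, hPg, ← hκdef, hsplit, hcp, hXdef]
      field_simp
      ring
    · have hc2 : c ^ (2:ℝ) = c ^ (2:ℕ) := by
        rw [show ((2:ℝ)) = ((2:ℕ):ℝ) by norm_num, Real.rpow_natCast]
      have hsqc : ∀ y : ℝ, 0 ≤ y → Real.sqrt (c ^ (2:ℝ) * y) = c * Real.sqrt y := by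
        intro y hy
        rw [Real.sqrt_mul (by positivity) y, hc2, Real.sqrt_sq hc.le]
      have hl : l2norm d (fun x => (c:ℂ) * f x) = c * l2norm d f := by
        unfold l2norm
        rw [ppow_smul' d 2 c hc.le f]
        exact hsqc _ (ppow_nonneg' d 2 f)
      have hs : Real.sqrt (gradSq d (fun x => (c:ℂ) * f x)) = c * Real.sqrt G := by
        rw [hGg]
        exact hsqc _ (gradSq_nonneg' d f)
      unfold Ifun
      have hml : (c * l2norm d f) ^ (p + 1 - (d:ℝ) * (p-1) / 2)
          = c ^ (p + 1 - (d:ℝ) * (p-1) / 2) * l2norm d f ^ (p + 1 - (d:ℝ) * (p-1) / 2) :=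
        Real.mul_rpow hc.le (show (0:ℝ) ≤ l2norm d f from Real.sqrt_nonneg _)
      have hms : (c * Real.sqrt G) ^ ((d:ℝ) * (p-1) / 2)
          = c ^ ((d:ℝ) * (p-1) / 2) * Real.sqrt G ^ ((d:ℝ) * (p-1) / 2) :=
        Real.mul_rpow hc.le (Real.sqrt_nonneg _)
      rw [hl, hs, hPg, hml, hms]
      have hca : c ^ (p + 1 - (d:ℝ) * (p-1) / 2) * c ^ ((d:ℝ) * (p-1) / 2)
          = c ^ (p+1) := by
        rw [← Real.rpow_add hc]; ring_nf
      rw [show c ^ (p + 1 - (d:ℝ) * (p-1) / 2) * l2norm d f ^ (p + 1 - (d:ℝ) * (p-1) / 2) *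
          (c ^ ((d:ℝ) * (p-1) / 2) * Real.sqrt G ^ ((d:ℝ) * (p-1) / 2))
          = c ^ (p+1) * (l2norm d f ^ (p + 1 - (d:ℝ) * (p-1) / 2) *
            Real.sqrt G ^ ((d:ℝ) * (p-1) / 2)) by rw [← hca]; ring]
      rw [mul_div_mul_left _ _ (ne_of_gt (Real.rpow_pos_of_pos hc _))]
  -- the key identity on the null set `K = 0`
  have key : ∀ g : Euc d → ℂ, Adm d p g → Kfun d p g = 0 →
      Ifun d p g = κ * N2fun d p g := by
    intro g hg hK
    rw [Ifun_eq' d p g hm2]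
    have hPg := hPpos g hg
    have hGg : gradSq d g = κ * ppow d (p+1) g := by
      unfold Kfun at hK; rw [← hκdef] at hK; linarith
    rw [hGg]
    field_simp
  -- K is nonpositive when the gradient vanishes
  have hKzero : ∀ f : Euc d → ℂ, Adm d p f → gradSq d f = 0 → Kfun d p f ≤ 0 := by
    intro f hf hG
    unfold Kfun
    rw [hG, ← hκdef]
    have hP := hPpos f hf
    nlinarith [hκ.le]
  -- nonemptiness
  obtain ⟨f₀, hf₀⟩ := adm_exists' d p
  have hS3ne : S3.Nonempty := ⟨Ifun d p f₀, f₀, hf₀, rfl⟩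
  have hS2ne : S2.Nonempty := by
    rcases (gradSq_nonneg' d f₀).lt_or_eq with hG | hG
    · obtain ⟨g, hg, hKg, _⟩ := scale f₀ hf₀ hG
      exact ⟨N2fun d p g, g, hg, le_of_eq hKg, rfl⟩
    · exact ⟨N2fun d p f₀, f₀, hf₀, hKzero f₀ hf₀ hG.symm, rfl⟩
  -- inequality: every element of S2 dominates `sInf S3 / κ`
  have ineq1 : ∀ r ∈ S2, sInf S3 ≤ κ * r := by
    intro r hr
    obtain ⟨f, hf, hK, rfl⟩ := hr
    have h3 : sInf S3 ≤ Ifun d p f := csInf_le hS3bdd ⟨f, hf, rfl⟩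
    have hP := hPpos f hf
    have hGle : gradSq d f ≤ κ * ppow d (p+1) f := by
      unfold Kfun at hK; rw [← hκdef] at hK; linarith
    have h4 : Ifun d p f ≤ κ * N2fun d p f := by
      rw [Ifun_eq' d p f hm2, div_le_iff₀ hP]
      calc N2fun d p f * gradSq d f
          ≤ N2fun d p f * (κ * ppow d (p+1) f) :=
            mul_le_mul_of_nonneg_left hGle (N2fun_nonneg' d p f)
        _ = κ * N2fun d p f * ppow d (p+1) f := by ring
    linarith
  -- inequality: `κ · sInf S2` is a lower bound for S3 elements
  have ineq2 : ∀ f : Euc d → ℂ, Adm d p f → κ * sInf S2 ≤ Ifun d p f := by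
    intro f hf
    rcases (gradSq_nonneg' d f).lt_or_eq with hG | hG
    · obtain ⟨g, hg, hKg, hIg⟩ := scale f hf hG
      have h1 : sInf S2 ≤ N2fun d p g := csInf_le hS2bdd ⟨g, hg, hKg.le, rfl⟩
      calc κ * sInf S2 ≤ κ * N2fun d p g := mul_le_mul_of_nonneg_left h1 hκ.le
        _ = Ifun d p g := (key g hg hKg).symm
        _ = Ifun d p f := hIg
    · have hG0 : gradSq d f = 0 := hG.symm
      have hN2f : N2fun d p f = 0 := by
        unfold N2fun
        rw [hG0, Real.sqrt_zero, Real.zero_rpow (by rw [← hmdef]; intro h; linarith), mul_zero]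
      have hIf : Ifun d p f = 0 := by
        unfold Ifun
        rw [hG0, Real.sqrt_zero, Real.zero_rpow (by rw [← hmdef]; intro h; linarith),
          mul_zero, zero_div]
      rw [hIf]
      have h0 : sInf S2 ≤ 0 := csInf_le hS2bdd ⟨f, hf, hKzero f hf hG0, hN2f.symm⟩
      nlinarith [hκ.le]
  -- conclusion
  rw [hN3, hN2]
  have hge : κ * sInf S2 ≤ sInf S3 := by
    apply le_csInf hS3ne
    rintro r ⟨f, hf, rfl⟩
    exact ineq2 f hf
  have hle : sInf S3 ≤ κ * sInf S2 := by
    have hdiv : sInf S3 / κ ≤ sInf S2 := by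
      apply le_csInf hS2ne
      intro r hr
      rw [div_le_iff₀ hκ]
      have := ineq1 r hr
      linarith
    have := (div_le_iff₀ hκ).1 hdiv
    linarith
  linarith
end
end

section
/- Assume d ≥ 1 and 2 + 4/d < p + 1 < 2*. If f ∈ H¹(ℝᵈ) is nonzero and satisfies 𝒦(f) = 0, then f does not belong to the potential well PW; consequently PW = PW₊ ∪ PW₋ with PW₊ ∩ PW₋ = ∅. -/
open MeasureTheory Filter Set
open scoped ENNReal Topology

noncomputable section

/-- `ℋ(f) = ‖∇f‖² − (2/(p+1))‖f‖_{p+1}^{p+1}`. -/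
def Hfun (d : ℕ) (p : ℝ) (f : Euc d → ℂ) : ℝ :=
  gradSq d f - (2 / (p + 1)) * ppow d (p + 1) f

/-- `ℬ(f) = ((d(p−1)−4)/(d(p−1))) (N₂/‖f‖_{L²}^{p+1−d(p−1)/2})^{4/(d(p−1)−4)}`. -/
def Bfun (d : ℕ) (p : ℝ) (f : Euc d → ℂ) : ℝ :=
  (((d : ℝ) * (p - 1) - 4) / ((d : ℝ) * (p - 1))) *
    (N2val d p / l2norm d f ^ (p + 1 - (d : ℝ) * (p - 1) / 2)) ^ (4 / ((d : ℝ) * (p - 1) - 4))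

/-- The potential well `PW = { f ∈ H¹\{0} : ℋ(f) < ℬ(f) }`. -/
def PWset (d : ℕ) (p : ℝ) : Set (Euc d → ℂ) :=
  {f | Adm d p f ∧ Hfun d p f < Bfun d p f}

/-- `PW₊ = { f ∈ PW : 𝒦(f) > 0 }`. -/
def PWplus (d : ℕ) (p : ℝ) : Set (Euc d → ℂ) :=
  {f | f ∈ PWset d p ∧ 0 < Kfun d p f}

/-- `PW₋ = { f ∈ PW : 𝒦(f) < 0 }`. -/
def PWminus (d : ℕ) (p : ℝ) : Set (Euc d → ℂ) :=
  {f | f ∈ PWset d p ∧ Kfun d p f < 0}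

/-- a nonzero `H¹` function with `𝒦(f) = 0` does not belong to the potential
well `PW`; consequently `PW = PW₊ ∪ PW₋` and `PW₊ ∩ PW₋ = ∅`. -/
theorem K_zero_not_mem_PW (d : ℕ) (p : ℝ) (hd : 1 ≤ d)
    (hp1 : 2 + 4 / (d : ℝ) < p + 1)
    (hp2 : 3 ≤ d → p + 1 < 2 * (d : ℝ) / ((d : ℝ) - 2)) :
    (∀ f : Euc d → ℂ, Adm d p f → Kfun d p f = 0 → f ∉ PWset d p) ∧
    PWset d p = PWplus d p ∪ PWminus d p ∧
    PWplus d p ∩ PWminus d p = ∅ := by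
  have hd0 : (0:ℝ) < d := by exact_mod_cast hd
  have h4d : (0:ℝ) < 4 / d := by positivity
  have hp0 : (0:ℝ) < p + 1 := by linarith
  have hA : (0:ℝ) < (d:ℝ) * (p - 1) - 4 := by
    have h1 : 4 / (d:ℝ) < p - 1 := by linarith
    have h2 := (div_lt_iff₀ hd0).mp h1
    nlinarith
  have hdp : (0:ℝ) < (d:ℝ) * (p - 1) := by linarith
  have key : ∀ f : Euc d → ℂ, Adm d p f → Kfun d p f = 0 → Bfun d p f ≤ Hfun d p f := by
    intro f hf hK
    have hint : Integrable (fun x => ‖f x‖ ^ (2:ℝ)) (volume : Measure (Euc d)) := by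
      have := hf.1.1.integrable_norm_rpow (p := 2) (by norm_num) (by norm_num)
      simpa using this
    have hpnn : (0:ℝ) ≤ ppow d 2 f :=
      integral_nonneg fun x => Real.rpow_nonneg (norm_nonneg _) _
    have hpp2 : 0 < ppow d 2 f := by
      rcases hpnn.lt_or_eq with h | h
      · exact h
      · exfalso
        have h0 : ∫ x, ‖f x‖ ^ (2:ℝ) = 0 := h.symm
        have hae := (integral_eq_zero_iff_of_nonneg
          (fun x => Real.rpow_nonneg (norm_nonneg _) _) hint).mp h0
        apply hf.2.2
        filter_upwards [hae] with x hx
        have := (Real.rpow_eq_zero_iff_of_nonneg (norm_nonneg (f x))).mp hx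
        simpa using norm_eq_zero.mp this.1
    have hL2 : 0 < l2norm d f := Real.sqrt_pos.mpr hpp2
    set L : ℝ := l2norm d f ^ (p + 1 - (d:ℝ) * (p - 1) / 2) with hLdef
    have hL : 0 < L := Real.rpow_pos_of_pos hL2 _
    have hG : (0:ℝ) ≤ gradSq d f := integral_nonneg fun x => by positivity
    have hbdd : ∀ r ∈ {r : ℝ | ∃ g : Euc d → ℂ, Adm d p g ∧ Kfun d p g ≤ 0 ∧ r = N2fun d p g},
        (0:ℝ) ≤ r := by
      rintro r ⟨g, -, -, rfl⟩
      have hl : (0:ℝ) ≤ l2norm d g := Real.sqrt_nonneg _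
      exact mul_nonneg (Real.rpow_nonneg hl _) (Real.rpow_nonneg (Real.sqrt_nonneg _) _)
    have hN0 : 0 ≤ N2val d p := Real.sInf_nonneg hbdd
    have hN2le : N2val d p ≤ N2fun d p f :=
      csInf_le ⟨0, fun r hr => hbdd r hr⟩ ⟨f, hf, hK.le, rfl⟩
    have hP : ((d:ℝ) * (p - 1)) * ppow d (p + 1) f = 2 * (p + 1) * gradSq d f := by
      unfold Kfun at hK
      field_simp at hK
      linarith
    have hHf : Hfun d p f = (((d:ℝ) * (p - 1) - 4) / ((d:ℝ) * (p - 1))) * gradSq d f := by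
      unfold Hfun
      have hpm1 : p - 1 ≠ 0 := by nlinarith
      field_simp
      nlinarith [hP]
    have hS2 : Real.sqrt (gradSq d f) ^ (2:ℝ) = gradSq d f := by
      rw [Real.rpow_two, Real.sq_sqrt hG]
    have hdiv : N2val d p / L ≤ Real.sqrt (gradSq d f) ^ ((d:ℝ) * (p - 1) / 2 - 2) := by
      rw [div_le_iff₀ hL]
      calc N2val d p ≤ N2fun d p f := hN2le
        _ = Real.sqrt (gradSq d f) ^ ((d:ℝ) * (p - 1) / 2 - 2) * L := by
            unfold N2fun; rw [hLdef]; ring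
    have h1 : (N2val d p / L) ^ (4 / ((d:ℝ) * (p - 1) - 4)) ≤
        (Real.sqrt (gradSq d f) ^ ((d:ℝ) * (p - 1) / 2 - 2)) ^ (4 / ((d:ℝ) * (p - 1) - 4)) :=
      Real.rpow_le_rpow (div_nonneg hN0 hL.le) hdiv (by positivity)
    have h2 : (Real.sqrt (gradSq d f) ^ ((d:ℝ) * (p - 1) / 2 - 2)) ^ (4 / ((d:ℝ) * (p - 1) - 4))
        = gradSq d f := by
      rw [← Real.rpow_mul (Real.sqrt_nonneg _)]
      have he : ((d:ℝ) * (p - 1) / 2 - 2) * (4 / ((d:ℝ) * (p - 1) - 4)) = 2 := by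
        field_simp
        ring
      rw [he, hS2]
    have hB : Bfun d p f ≤ (((d:ℝ) * (p - 1) - 4) / ((d:ℝ) * (p - 1))) * gradSq d f := by
      unfold Bfun
      rw [← hLdef]
      calc (((d:ℝ) * (p - 1) - 4) / ((d:ℝ) * (p - 1))) *
            (N2val d p / L) ^ (4 / ((d:ℝ) * (p - 1) - 4))
          ≤ (((d:ℝ) * (p - 1) - 4) / ((d:ℝ) * (p - 1))) *
            ((Real.sqrt (gradSq d f) ^ ((d:ℝ) * (p - 1) / 2 - 2)) ^ (4 / ((d:ℝ) * (p - 1) - 4))) :=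
            mul_le_mul_of_nonneg_left h1 (by positivity)
        _ = (((d:ℝ) * (p - 1) - 4) / ((d:ℝ) * (p - 1))) * gradSq d f := by rw [h2]
    rw [hHf]
    exact hB
  have part1 : ∀ f : Euc d → ℂ, Adm d p f → Kfun d p f = 0 → f ∉ PWset d p := by
    intro f hf hK hmem
    exact absurd hmem.2 (not_lt.mpr (key f hf hK))
  refine ⟨part1, ?_, ?_⟩
  · ext f
    constructor
    · intro hmem
      rcases lt_trichotomy (Kfun d p f) 0 with h | h | h
      · exact Or.inr ⟨hmem, h⟩
      · exact absurd hmem (part1 f hmem.1 h)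
      · exact Or.inl ⟨hmem, h⟩
    · rintro (⟨h, -⟩ | ⟨h, -⟩) <;> exact h
  · rw [Set.eq_empty_iff_forall_notMem]
    rintro f ⟨⟨-, h1⟩, ⟨-, h2⟩⟩
    linarith
end
end

section
/- Let 0 < q < ∞, L ∈ ℕ, and a₁, …, a_L ∈ ℂ. Then there exists a constant C depending only on q and L such that | |Σ_{k=1}^L a_k|^q Σ_{l=1}^L a_l − Σ_{l=1}^L |a_l|^q a_l | ≤ C Σ_{l=1}^L Σ_{k≠l} |a_l| |a_k|^q. -/
noncomputable section

private lemma real_add_rpow_le {x y q : ℝ} (hx : 0 ≤ x) (hy : 0 ≤ y) (hq0 : 0 ≤ q)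
    (hq1 : q ≤ 1) : (x + y) ^ q ≤ x ^ q + y ^ q := by
  have h := NNReal.rpow_add_le_add_rpow x.toNNReal y.toNNReal hq0 hq1
  have h2 := NNReal.coe_le_coe.2 h
  push_cast at h2
  rwa [Real.coe_toNNReal x hx, Real.coe_toNNReal y hy] at h2

private lemma sum_rpow_le_card_mul {ι : Type*} (s : Finset ι) (c : ι → ℝ)
    (hc : ∀ i ∈ s, 0 ≤ c i) {q : ℝ} (hq : 0 < q) :
    (∑ i ∈ s, c i) ^ q ≤ (s.card : ℝ) ^ q * ∑ i ∈ s, c i ^ q := by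
  rcases s.eq_empty_or_nonempty with rfl | hs
  · simp [Real.zero_rpow hq.ne']
  obtain ⟨i0, hi0, hmax⟩ := s.exists_max_image c hs
  have hc0 : 0 ≤ c i0 := hc i0 hi0
  have h1 : ∑ i ∈ s, c i ≤ (s.card : ℝ) * c i0 := by
    calc ∑ i ∈ s, c i ≤ ∑ _i ∈ s, c i0 := Finset.sum_le_sum fun i hi => hmax i hi
      _ = (s.card : ℝ) * c i0 := by rw [Finset.sum_const, nsmul_eq_mul]
  have h2 : (∑ i ∈ s, c i) ^ q ≤ ((s.card : ℝ) * c i0) ^ q :=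
    Real.rpow_le_rpow (Finset.sum_nonneg hc) h1 hq.le
  rw [Real.mul_rpow (by positivity) hc0] at h2
  refine h2.trans (mul_le_mul_of_nonneg_left ?_ (Real.rpow_nonneg (Nat.cast_nonneg _) q))
  exact Finset.single_le_sum (fun i hi => Real.rpow_nonneg (hc i hi) q) hi0

private lemma add_rpow_le' {q : ℝ} (hq : 1 ≤ q) {a b : ℝ} (ha : 0 ≤ a) (hb : 0 ≤ b) :
    (a + b) ^ q ≤ a ^ q + 2 ^ q * (b ^ q + b * a ^ (q - 1)) := by
  have h2q : (0 : ℝ) < 2 ^ q := Real.rpow_pos_of_pos two_pos q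
  have haq : 0 ≤ a ^ q := Real.rpow_nonneg ha q
  have hbq : 0 ≤ b ^ q := Real.rpow_nonneg hb q
  have hba1 : 0 ≤ b * a ^ (q - 1) := mul_nonneg hb (Real.rpow_nonneg ha _)
  rcases le_total a b with hab | hba
  · have h1 : (a + b) ^ q ≤ (2 * b) ^ q :=
      Real.rpow_le_rpow (by linarith) (by linarith) (by linarith)
    rw [Real.mul_rpow (by norm_num) hb] at h1
    nlinarith
  · rcases ha.eq_or_lt with h0 | hpos
    · have hb0 : b = 0 := le_antisymm (h0 ▸ hba) hb
      subst hb0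
      rw [← h0]
      simp [Real.zero_rpow (by linarith : q ≠ 0)]
    · have h2a : (0 : ℝ) ≤ 2 * a := by linarith
      have hα : (0 : ℝ) ≤ 1 - b / a := by
        rw [sub_nonneg]
        exact (div_le_one hpos).2 hba
      have hβ : (0 : ℝ) ≤ b / a := div_nonneg hb hpos.le
      have hαβ : (1 - b / a) + b / a = 1 := by ring
      have hcx := (convexOn_rpow hq).2 (Set.mem_Ici.2 ha) (Set.mem_Ici.2 h2a) hα hβ hαβ
      simp only [smul_eq_mul] at hcx
      have hpoint : (1 - b / a) * a + b / a * (2 * a) = a + b := by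
        field_simp
        ring
      rw [hpoint, Real.mul_rpow (by norm_num) ha] at hcx
      have hba' : b / a * a ^ q = b * a ^ (q - 1) := by
        rw [Real.rpow_sub_one hpos.ne']
        ring
      have hrhs : (1 - b / a) * a ^ q + b / a * (2 ^ q * a ^ q)
          = a ^ q + (2 ^ q - 1) * (b * a ^ (q - 1)) := by
        rw [← hba']
        ring
      rw [hrhs] at hcx
      nlinarith

private lemma key_ineq {q : ℝ} (hq : 0 < q) {x y d : ℝ} (hx : 0 ≤ x) (hy : 0 ≤ y)
    (hd : |x - y| ≤ d) :
    y * |x ^ q - y ^ q| ≤ (2 ^ q + 1) * (y * d ^ q + d * y ^ q) := by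
  have hd0 : 0 ≤ d := (abs_nonneg _).trans hd
  have h2q : (0 : ℝ) < 2 ^ q := Real.rpow_pos_of_pos two_pos q
  have hydq : 0 ≤ y * d ^ q := mul_nonneg hy (Real.rpow_nonneg hd0 q)
  have hdyq : 0 ≤ d * y ^ q := mul_nonneg hd0 (Real.rpow_nonneg hy q)
  rcases le_total q 1 with hq1 | hq1
  · have habs : |x ^ q - y ^ q| ≤ d ^ q := by
      rcases le_total x y with hxy | hxy
      · have h1 : y ^ q ≤ x ^ q + (y - x) ^ q := by
          have h := real_add_rpow_le hx (sub_nonneg.2 hxy) hq.le hq1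
          simpa using h
        have h2 : (y - x) ^ q ≤ d ^ q := by
          refine Real.rpow_le_rpow (by linarith) ?_ hq.le
          rw [abs_sub_comm] at hd
          exact (le_abs_self _).trans hd
        have h3 : x ^ q ≤ y ^ q := Real.rpow_le_rpow hx hxy hq.le
        rw [abs_of_nonpos (by linarith)]
        linarith
      · have h1 : x ^ q ≤ y ^ q + (x - y) ^ q := by
          have h := real_add_rpow_le hy (sub_nonneg.2 hxy) hq.le hq1
          simpa using h
        have h2 : (x - y) ^ q ≤ d ^ q :=
          Real.rpow_le_rpow (by linarith) ((le_abs_self _).trans hd) hq.le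
        have h3 : y ^ q ≤ x ^ q := Real.rpow_le_rpow hy hxy hq.le
        rw [abs_of_nonneg (by linarith)]
        linarith
    have h4 : y * |x ^ q - y ^ q| ≤ y * d ^ q := mul_le_mul_of_nonneg_left habs hy
    nlinarith
  · have hyy : y * y ^ (q - 1) ≤ y ^ q := by
      rcases hy.eq_or_lt with h0 | hpos
      · rw [← h0]
        simp [Real.zero_rpow hq.ne']
      · rw [Real.rpow_sub_one hpos.ne']
        rw [mul_div_cancel₀ _ hpos.ne']
    rcases le_total x y with hxy | hxy
    · have hxd : y ≤ x + d := by
        rw [abs_sub_comm] at hd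
        have := (le_abs_self (y - x)).trans hd
        linarith
      have h1 : y ^ q ≤ (x + d) ^ q := Real.rpow_le_rpow hy hxd hq.le
      have h2 := add_rpow_le' hq1 hx hd0
      have h3 : x ^ (q - 1) ≤ y ^ (q - 1) := Real.rpow_le_rpow hx hxy (by linarith)
      have h4 : x ^ q ≤ y ^ q := Real.rpow_le_rpow hx hxy hq.le
      rw [abs_of_nonpos (by linarith)]
      have h5 : y * (y ^ q - x ^ q) ≤ y * (2 ^ q * (d ^ q + d * x ^ (q - 1))) :=
        mul_le_mul_of_nonneg_left (by linarith) hy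
      have h6 : y * (2 ^ q * (d ^ q + d * x ^ (q - 1)))
          = 2 ^ q * (y * d ^ q + d * (y * x ^ (q - 1))) := by ring
      have h7 : y * x ^ (q - 1) ≤ y ^ q :=
        (mul_le_mul_of_nonneg_left h3 hy).trans hyy
      have h8 : d * (y * x ^ (q - 1)) ≤ d * y ^ q := mul_le_mul_of_nonneg_left h7 hd0
      nlinarith
    · have hxd : x ≤ y + d := by
        have := (le_abs_self (x - y)).trans hd
        linarith
      have h1 : x ^ q ≤ (y + d) ^ q := Real.rpow_le_rpow hx hxd hq.le
      have h2 := add_rpow_le' hq1 hy hd0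
      have h4 : y ^ q ≤ x ^ q := Real.rpow_le_rpow hy hxy hq.le
      rw [abs_of_nonneg (by linarith)]
      have h5 : y * (x ^ q - y ^ q) ≤ y * (2 ^ q * (d ^ q + d * y ^ (q - 1))) :=
        mul_le_mul_of_nonneg_left (by linarith) hy
      have h6 : y * (2 ^ q * (d ^ q + d * y ^ (q - 1)))
          = 2 ^ q * (y * d ^ q + d * (y * y ^ (q - 1))) := by ring
      have h8 : d * (y * y ^ (q - 1)) ≤ d * y ^ q := mul_le_mul_of_nonneg_left hyy hd0
      nlinarith

private lemma sum_erase_swap {L : ℕ} (f : Fin L → Fin L → ℝ) :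
    ∑ l, ∑ k ∈ Finset.univ.erase l, f l k = ∑ l, ∑ k ∈ Finset.univ.erase l, f k l := by
  simp only [Finset.sum_erase_eq_sub (Finset.mem_univ _)]
  rw [Finset.sum_sub_distrib, Finset.sum_sub_distrib, Finset.sum_comm]

/-- for `0 < q < ∞`, `L ∈ ℕ` and complex numbers `a₁, …, a_L`, there is a
constant `C` depending only on `q` and `L` with
`| |Σ a_k|^q Σ a_l − Σ |a_l|^q a_l | ≤ C Σ_l Σ_{k≠l} |a_l| |a_k|^q`. -/
theorem decoupling_inequality (q : ℝ) (hq : 0 < q) (L : ℕ) :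
    ∃ C : ℝ, 0 < C ∧ ∀ a : Fin L → ℂ,
      ‖((‖∑ k, a k‖ ^ q : ℝ) : ℂ) * (∑ l, a l) - ∑ l, ((‖a l‖ ^ q : ℝ) : ℂ) * a l‖
        ≤ C * ∑ l, ∑ k ∈ Finset.univ.erase l, ‖a l‖ * ‖a k‖ ^ q := by
  refine ⟨(2 ^ q + 1) * ((L : ℝ) ^ q + 1), by positivity, fun a => ?_⟩
  set x := ‖∑ k, a k‖ with hxdef
  set D : Fin L → ℝ := fun l => ∑ k ∈ Finset.univ.erase l, ‖a k‖ with hD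
  set R : ℝ := ∑ l, ∑ k ∈ Finset.univ.erase l, ‖a l‖ * ‖a k‖ ^ q with hR
  have hRnn : 0 ≤ R :=
    Finset.sum_nonneg fun l _ => Finset.sum_nonneg fun k _ =>
      mul_nonneg (norm_nonneg _) (Real.rpow_nonneg (norm_nonneg _) q)
  have hstep1 : ((x ^ q : ℝ) : ℂ) * (∑ l, a l) - ∑ l, ((‖a l‖ ^ q : ℝ) : ℂ) * a l
      = ∑ l, (((x ^ q - ‖a l‖ ^ q : ℝ)) : ℂ) * a l := by
    rw [Finset.mul_sum, ← Finset.sum_sub_distrib]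
    exact Finset.sum_congr rfl fun l _ => by push_cast; ring
  rw [hstep1]
  have hDnn : ∀ l, 0 ≤ D l := fun l => Finset.sum_nonneg fun k _ => norm_nonneg _
  have hdist : ∀ l, |x - ‖a l‖| ≤ D l := by
    intro l
    have h1 : (∑ k, a k) - a l = ∑ k ∈ Finset.univ.erase l, a k :=
      (Finset.sum_erase_eq_sub (Finset.mem_univ l)).symm
    calc |x - ‖a l‖| ≤ ‖(∑ k, a k) - a l‖ := abs_norm_sub_norm_le _ _
      _ = ‖∑ k ∈ Finset.univ.erase l, a k‖ := by rw [h1]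
      _ ≤ D l := norm_sum_le _ _
  have hterm : ∀ l, ‖(((x ^ q - ‖a l‖ ^ q : ℝ)) : ℂ) * a l‖
      ≤ (2 ^ q + 1) * (‖a l‖ * (D l) ^ q + D l * ‖a l‖ ^ q) := by
    intro l
    rw [norm_mul, Complex.norm_real, Real.norm_eq_abs, mul_comm]
    exact key_ineq hq (norm_nonneg _) (norm_nonneg _) (hdist l)
  have hA : ∀ l, ‖a l‖ * (D l) ^ q
      ≤ (L : ℝ) ^ q * ∑ k ∈ Finset.univ.erase l, ‖a l‖ * ‖a k‖ ^ q := by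
    intro l
    have h1 : (D l) ^ q ≤ ((Finset.univ.erase l).card : ℝ) ^ q
        * ∑ k ∈ Finset.univ.erase l, ‖a k‖ ^ q :=
      sum_rpow_le_card_mul _ _ (fun k _ => norm_nonneg _) hq
    have hcard : ((Finset.univ.erase l).card : ℝ) ≤ (L : ℝ) := by
      have h : (Finset.univ.erase l).card ≤ L :=
        le_trans Finset.card_erase_le (by simp)
      exact_mod_cast h
    have h2 : ((Finset.univ.erase l).card : ℝ) ^ q ≤ (L : ℝ) ^ q :=
      Real.rpow_le_rpow (Nat.cast_nonneg _) hcard hq.le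
    have h3 : (D l) ^ q ≤ (L : ℝ) ^ q * ∑ k ∈ Finset.univ.erase l, ‖a k‖ ^ q :=
      h1.trans (mul_le_mul_of_nonneg_right h2
        (Finset.sum_nonneg fun k _ => Real.rpow_nonneg (norm_nonneg _) q))
    calc ‖a l‖ * (D l) ^ q
        ≤ ‖a l‖ * ((L : ℝ) ^ q * ∑ k ∈ Finset.univ.erase l, ‖a k‖ ^ q) :=
          mul_le_mul_of_nonneg_left h3 (norm_nonneg _)
      _ = (L : ℝ) ^ q * ∑ k ∈ Finset.univ.erase l, ‖a l‖ * ‖a k‖ ^ q := by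
          simp only [Finset.mul_sum]
          exact Finset.sum_congr rfl fun k _ => by ring
  have e1 : ∑ l, ‖a l‖ * (D l) ^ q ≤ (L : ℝ) ^ q * R := by
    rw [hR, Finset.mul_sum]
    exact Finset.sum_le_sum fun l _ => hA l
  have e2 : ∑ l, D l * ‖a l‖ ^ q = R := by
    have h : ∀ l, D l * ‖a l‖ ^ q = ∑ k ∈ Finset.univ.erase l, ‖a k‖ * ‖a l‖ ^ q := by
      intro l
      rw [hD]
      exact Finset.sum_mul _ _ _
    simp only [h]
    exact sum_erase_swap fun l k => ‖a k‖ * ‖a l‖ ^ q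
  have hsum : ∑ l, (‖a l‖ * (D l) ^ q + D l * ‖a l‖ ^ q) ≤ ((L : ℝ) ^ q + 1) * R := by
    rw [Finset.sum_add_distrib]
    have : ((L : ℝ) ^ q + 1) * R = (L : ℝ) ^ q * R + R := by ring
    rw [this]
    linarith
  calc ‖∑ l, (((x ^ q - ‖a l‖ ^ q : ℝ)) : ℂ) * a l‖
      ≤ ∑ l, ‖(((x ^ q - ‖a l‖ ^ q : ℝ)) : ℂ) * a l‖ := norm_sum_le _ _
    _ ≤ ∑ l, (2 ^ q + 1) * (‖a l‖ * (D l) ^ q + D l * ‖a l‖ ^ q) :=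
        Finset.sum_le_sum fun l _ => hterm l
    _ = (2 ^ q + 1) * ∑ l, (‖a l‖ * (D l) ^ q + D l * ‖a l‖ ^ q) :=
        (Finset.mul_sum _ _ _).symm
    _ ≤ (2 ^ q + 1) * (((L : ℝ) ^ q + 1) * R) := by
        have h2q : (0 : ℝ) < 2 ^ q := Real.rpow_pos_of_pos two_pos q
        exact mul_le_mul_of_nonneg_left hsum (by positivity)
    _ = (2 ^ q + 1) * ((L : ℝ) ^ q + 1) * R := by ring
end
end

section
/- Let 1 < α < β < γ < ∞ and let f be a measurable function on ℝᵈ with ‖f‖_{L^α}^α ≤ C_α, ‖f‖_{L^β}^β ≥ C_β, ‖f‖_{L^γ}^γ ≤ C_γ for positive constants C_α, C_β, C_γ. Then for every η with 0 < η < min{1, (C_β/(4C_α))^{1/(β−α)}, (C_β/(4C_γ))^{1/(γ−β)}}, the Lebesgue measure of the super-level set satisfies ℒᵈ({x : |f(x)| > η}) > (C_β/2) η^{β}. -/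
open MeasureTheory
open scoped ENNReal

noncomputable section

/-- if `1 < α < β < γ < ∞` and a measurable `f` on `ℝᵈ` satisfies
`∫|f|^α ≤ C_α`, `∫|f|^β ≥ C_β`, `∫|f|^γ ≤ C_γ`, then for every
`0 < η < min{1, (C_β/(4C_α))^{1/(β−α)}, (C_β/(4C_γ))^{1/(γ−β)}}` one has
`ℒᵈ({|f| > η}) > (C_β/2) η^β`. -/
theorem level_set_lower_bound (d : ℕ) (α β γ : ℝ)
    (hα : 1 < α) (hαβ : α < β) (hβγ : β < γ)
    (f : Euc d → ℂ) (hf : Measurable f)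
    (Cα Cβ Cγ : ℝ) (hCα : 0 < Cα) (hCβ : 0 < Cβ) (hCγ : 0 < Cγ)
    (h1 : ∫⁻ x, (‖f x‖₊ : ℝ≥0∞) ^ α ≤ ENNReal.ofReal Cα)
    (h2 : ENNReal.ofReal Cβ ≤ ∫⁻ x, (‖f x‖₊ : ℝ≥0∞) ^ β)
    (h3 : ∫⁻ x, (‖f x‖₊ : ℝ≥0∞) ^ γ ≤ ENNReal.ofReal Cγ)
    (η : ℝ) (hη0 : 0 < η)
    (hη : η < min 1 (min ((Cβ / (4 * Cα)) ^ ((1 : ℝ) / (β - α)))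
        ((Cβ / (4 * Cγ)) ^ ((1 : ℝ) / (γ - β))))) :
    ENNReal.ofReal (Cβ / 2 * η ^ β) < volume {x : Euc d | η < ‖f x‖} := by
  have hβ0 : (0:ℝ) < β := by linarith
  have hβα : (0:ℝ) < β - α := by linarith
  have hγβ : (0:ℝ) < γ - β := by linarith
  set g : Euc d → ℝ≥0∞ := fun x => (‖f x‖₊ : ℝ≥0∞) with hgdef
  have hg : Measurable g := hf.nnnorm.coe_nnreal_ennreal
  set S : Set (Euc d) := {x : Euc d | η < ‖f x‖} with hSdef
  have hSmeas : MeasurableSet S := measurableSet_lt measurable_const hf.norm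
  set T : Set (Euc d) := {x : Euc d | g x ≤ ENNReal.ofReal η⁻¹} with hTdef
  have hTmeas : MeasurableSet T := measurableSet_le hg measurable_const
  -- real inequalities on η
  have hη1 : η < (Cβ / (4 * Cα)) ^ ((1 : ℝ) / (β - α)) :=
    lt_of_lt_of_le hη (le_trans (min_le_right _ _) (min_le_left _ _))
  have hη2 : η < (Cβ / (4 * Cγ)) ^ ((1 : ℝ) / (γ - β)) :=
    lt_of_lt_of_le hη (le_trans (min_le_right _ _) (min_le_right _ _))
  have key1 : η ^ (β - α) * Cα < Cβ / 4 := by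
    have h := Real.rpow_lt_rpow hη0.le hη1 hβα
    rw [← Real.rpow_mul (by positivity), one_div, inv_mul_cancel₀ hβα.ne',
      Real.rpow_one] at h
    calc η ^ (β - α) * Cα < Cβ / (4 * Cα) * Cα := by
          exact mul_lt_mul_of_pos_right h hCα
      _ = Cβ / 4 := by field_simp
  have key2 : η ^ (γ - β) * Cγ < Cβ / 4 := by
    have h := Real.rpow_lt_rpow hη0.le hη2 hγβ
    rw [← Real.rpow_mul (by positivity), one_div, inv_mul_cancel₀ hγβ.ne',
      Real.rpow_one] at h
    calc η ^ (γ - β) * Cγ < Cβ / (4 * Cγ) * Cγ := by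
          exact mul_lt_mul_of_pos_right h hCγ
      _ = Cβ / 4 := by field_simp
  -- pointwise bound on Sᶜ : g ≤ η there
  have bound1 : ∫⁻ x in Sᶜ, g x ^ β ≤ ENNReal.ofReal (η ^ (β - α) * Cα) := by
    have hpt : ∀ x ∈ Sᶜ, g x ^ β ≤ ENNReal.ofReal (η ^ (β - α)) * g x ^ α := by
      intro x hx
      have hxle : g x ≤ ENNReal.ofReal η := by
        simp only [Set.mem_compl_iff, hSdef, Set.mem_setOf_eq, not_lt] at hx
        show ((‖f x‖₊ : ℝ≥0∞)) ≤ ENNReal.ofReal η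
        rw [← enorm_eq_nnnorm, ← ofReal_norm]
        exact ENNReal.ofReal_le_ofReal hx
      have : g x ^ β = g x ^ (β - α) * g x ^ α := by
        rw [← ENNReal.rpow_add_of_nonneg _ _ hβα.le (by linarith : (0:ℝ) ≤ α)]
        ring_nf
      rw [this]
      refine mul_le_mul_left ?_ _
      calc g x ^ (β - α) ≤ (ENNReal.ofReal η) ^ (β - α) :=
            ENNReal.rpow_le_rpow hxle hβα.le
        _ = ENNReal.ofReal (η ^ (β - α)) := ENNReal.ofReal_rpow_of_pos hη0
    calc ∫⁻ x in Sᶜ, g x ^ β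
        ≤ ∫⁻ x in Sᶜ, ENNReal.ofReal (η ^ (β - α)) * g x ^ α :=
          setLIntegral_mono (by fun_prop) hpt
      _ = ENNReal.ofReal (η ^ (β - α)) * ∫⁻ x in Sᶜ, g x ^ α :=
          lintegral_const_mul _ (hg.pow_const α)
      _ ≤ ENNReal.ofReal (η ^ (β - α)) * ∫⁻ x, g x ^ α := by
          gcongr
          exact Measure.restrict_le_self
      _ ≤ ENNReal.ofReal (η ^ (β - α)) * ENNReal.ofReal Cα := by gcongr
      _ = ENNReal.ofReal (η ^ (β - α) * Cα) := by
          rw [← ENNReal.ofReal_mul (by positivity)]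
  -- pointwise bound on S \ T : g > 1/η there
  have bound3 : ∫⁻ x in S \ T, g x ^ β ≤ ENNReal.ofReal (η ^ (γ - β) * Cγ) := by
    have hpt : ∀ x ∈ S \ T, g x ^ β ≤ ENNReal.ofReal (η ^ (γ - β)) * g x ^ γ := by
      intro x hx
      have hxgt : ENNReal.ofReal η⁻¹ < g x := by
        have := hx.2
        simp only [hTdef, Set.mem_setOf_eq, not_le] at this
        exact this
      have hx0 : g x ≠ 0 :=
        (lt_of_le_of_lt (zero_le) hxgt).ne'
      have hxtop : g x ≠ ⊤ := ENNReal.coe_ne_top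
      have hsplit : g x ^ γ = g x ^ (γ - β) * g x ^ β := by
        rw [← ENNReal.rpow_add _ _ hx0 hxtop]; ring_nf
      have hone : (1 : ℝ≥0∞) ≤ ENNReal.ofReal (η ^ (γ - β)) * g x ^ (γ - β) := by
        calc (1 : ℝ≥0∞) = ENNReal.ofReal (η ^ (γ - β)) * ENNReal.ofReal (η⁻¹ ^ (γ - β)) := by
              rw [← ENNReal.ofReal_mul (by positivity),
                ← Real.mul_rpow hη0.le (by positivity), mul_inv_cancel₀ hη0.ne',
                Real.one_rpow, ENNReal.ofReal_one]
          _ ≤ ENNReal.ofReal (η ^ (γ - β)) * g x ^ (γ - β) := by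
              gcongr
              calc ENNReal.ofReal (η⁻¹ ^ (γ - β)) = (ENNReal.ofReal η⁻¹) ^ (γ - β) :=
                    (ENNReal.ofReal_rpow_of_pos (by positivity)).symm
                _ ≤ g x ^ (γ - β) := ENNReal.rpow_le_rpow hxgt.le hγβ.le
      calc g x ^ β = 1 * g x ^ β := (one_mul _).symm
        _ ≤ (ENNReal.ofReal (η ^ (γ - β)) * g x ^ (γ - β)) * g x ^ β :=
            mul_le_mul_left hone _
        _ = ENNReal.ofReal (η ^ (γ - β)) * g x ^ γ := by rw [hsplit, mul_assoc]
    calc ∫⁻ x in S \ T, g x ^ β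
        ≤ ∫⁻ x in S \ T, ENNReal.ofReal (η ^ (γ - β)) * g x ^ γ :=
          setLIntegral_mono (by fun_prop) hpt
      _ = ENNReal.ofReal (η ^ (γ - β)) * ∫⁻ x in S \ T, g x ^ γ :=
          lintegral_const_mul _ (hg.pow_const γ)
      _ ≤ ENNReal.ofReal (η ^ (γ - β)) * ∫⁻ x, g x ^ γ := by
          gcongr
          exact Measure.restrict_le_self
      _ ≤ ENNReal.ofReal (η ^ (γ - β)) * ENNReal.ofReal Cγ := by gcongr
      _ = ENNReal.ofReal (η ^ (γ - β) * Cγ) := by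
          rw [← ENNReal.ofReal_mul (by positivity)]
  -- bound on S ∩ T
  have bound2 : ∫⁻ x in S ∩ T, g x ^ β ≤ ENNReal.ofReal (η⁻¹ ^ β) * volume S := by
    have hpt : ∀ x ∈ S ∩ T, g x ^ β ≤ ENNReal.ofReal (η⁻¹ ^ β) := by
      intro x hx
      calc g x ^ β ≤ (ENNReal.ofReal η⁻¹) ^ β :=
            ENNReal.rpow_le_rpow hx.2 hβ0.le
        _ = ENNReal.ofReal (η⁻¹ ^ β) := ENNReal.ofReal_rpow_of_pos (by positivity)
    calc ∫⁻ x in S ∩ T, g x ^ β ≤ ∫⁻ _ in S ∩ T, ENNReal.ofReal (η⁻¹ ^ β) :=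
          setLIntegral_mono measurable_const hpt
      _ = ENNReal.ofReal (η⁻¹ ^ β) * volume (S ∩ T) := setLIntegral_const _ _
      _ ≤ ENNReal.ofReal (η⁻¹ ^ β) * volume S := by
          gcongr
          exact Set.inter_subset_left
  -- combine
  have hsum : ENNReal.ofReal Cβ ≤
      ENNReal.ofReal (η ^ (β - α) * Cα) + ENNReal.ofReal (η ^ (γ - β) * Cγ)
        + ENNReal.ofReal (η⁻¹ ^ β) * volume S := by
    calc ENNReal.ofReal Cβ ≤ ∫⁻ x, g x ^ β := h2
      _ = (∫⁻ x in S, g x ^ β) + ∫⁻ x in Sᶜ, g x ^ β :=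
          (lintegral_add_compl _ hSmeas).symm
      _ = ((∫⁻ x in S ∩ T, g x ^ β) + ∫⁻ x in S \ T, g x ^ β) + ∫⁻ x in Sᶜ, g x ^ β := by
          rw [lintegral_inter_add_diff _ _ hTmeas]
      _ ≤ (ENNReal.ofReal (η⁻¹ ^ β) * volume S + ENNReal.ofReal (η ^ (γ - β) * Cγ))
            + ENNReal.ofReal (η ^ (β - α) * Cα) := by
          gcongr
      _ = _ := by ring
  by_contra hcon
  push_neg at hcon
  have hmul : ENNReal.ofReal (η⁻¹ ^ β) * volume S ≤ ENNReal.ofReal (Cβ / 2) := by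
    calc ENNReal.ofReal (η⁻¹ ^ β) * volume S
        ≤ ENNReal.ofReal (η⁻¹ ^ β) * ENNReal.ofReal (Cβ / 2 * η ^ β) := by gcongr
      _ = ENNReal.ofReal (η⁻¹ ^ β * (Cβ / 2 * η ^ β)) := by
          rw [← ENNReal.ofReal_mul (by positivity)]
      _ = ENNReal.ofReal (Cβ / 2) := by
          congr 1
          rw [Real.inv_rpow hη0.le]
          field_simp
  have hlt : ENNReal.ofReal (η ^ (β - α) * Cα) + ENNReal.ofReal (η ^ (γ - β) * Cγ)
      + ENNReal.ofReal (η⁻¹ ^ β) * volume S < ENNReal.ofReal Cβ := by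
    calc ENNReal.ofReal (η ^ (β - α) * Cα) + ENNReal.ofReal (η ^ (γ - β) * Cγ)
          + ENNReal.ofReal (η⁻¹ ^ β) * volume S
        ≤ ENNReal.ofReal (η ^ (β - α) * Cα) + ENNReal.ofReal (η ^ (γ - β) * Cγ)
          + ENNReal.ofReal (Cβ / 2) := by gcongr
      _ = ENNReal.ofReal (η ^ (β - α) * Cα + η ^ (γ - β) * Cγ + Cβ / 2) := by
          rw [ENNReal.ofReal_add (by positivity) (by positivity),
            ENNReal.ofReal_add (by positivity) (by positivity)]
      _ < ENNReal.ofReal Cβ := by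
          exact (ENNReal.ofReal_lt_ofReal_iff hCβ).mpr (by linarith)
  exact absurd hsum (not_le.mpr hlt)
end
end

section
/- Let 0 < q < ∞ and let (f_n) be a uniformly bounded sequence in L^q(ℝᵈ) with f_n → f almost everywhere for some f ∈ L^q(ℝᵈ). Then lim_{n→∞} ∫_{ℝᵈ} | |f_n|^q − |f_n − f|^q − |f|^q | dx = 0. -/
open MeasureTheory Filter
open scoped ENNReal Topology

noncomputable section

lemma aux_rpow_add_le (q η a b : ℝ) (hq : 0 ≤ q) (hη : 0 < η) (ha : 0 ≤ a) (hb : 0 ≤ b) :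
    (a + b) ^ q ≤ (1 + η) ^ q * a ^ q + (1 + 1/η) ^ q * b ^ q := by
  have h1 : (0:ℝ) < 1 + η := by linarith
  have h2 : (0:ℝ) < 1 + 1/η := by positivity
  have hmax : a + b ≤ max ((1+η)*a) ((1+1/η)*b) := by
    rcases le_or_gt b (η * a) with h | h
    · exact le_max_of_le_left (by nlinarith)
    · refine le_max_of_le_right ?_
      have hab : a ≤ b / η := by rw [le_div_iff₀ hη]; nlinarith
      have : (1+1/η)*b = b + b/η := by field_simp
      rw [this]; linarith
  have h3 : (a+b)^q ≤ (max ((1+η)*a) ((1+1/η)*b))^q :=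
    Real.rpow_le_rpow (by positivity) hmax hq
  refine h3.trans ?_
  rcases max_cases ((1+η)*a) ((1+1/η)*b) with ⟨heq, _⟩ | ⟨heq, _⟩ <;>
    rw [heq, Real.mul_rpow (by positivity) (by assumption)]
  · exact le_add_of_nonneg_right (by positivity)
  · exact le_add_of_nonneg_left (by positivity)

lemma aux_key (q : ℝ) (hq : 0 < q) (δ : ℝ) (hδ : 0 < δ) :
    ∃ C : ℝ, 0 ≤ C ∧ ∀ x s t : ℝ, 0 ≤ x → 0 ≤ s → 0 ≤ t → |x - s| ≤ t →
      |x ^ q - s ^ q| ≤ δ * s ^ q + C * t ^ q := by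
  set δ₀ := min δ 1 / 2 with hδ₀def
  have hδ₀ : 0 < δ₀ := by simp [hδ₀def]; positivity
  have hδ₀δ : δ₀ ≤ δ / 2 := by simp [hδ₀def]; nlinarith [min_le_left δ 1]
  have hδ₀1 : δ₀ ≤ 1/2 := by simp [hδ₀def]; nlinarith [min_le_right δ 1]
  set η := (1 + δ₀) ^ q⁻¹ - 1 with hηdef
  have hη : 0 < η := by
    have : 1 < (1 + δ₀) ^ q⁻¹ :=
      (Real.one_lt_rpow_iff_of_pos (by linarith)).2 (Or.inl ⟨by linarith, by positivity⟩)
    simp [hηdef]; linarith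
  have h1η : 1 + η = (1 + δ₀) ^ q⁻¹ := by rw [hηdef]; ring
  have hpow : (1 + η) ^ q = 1 + δ₀ := by
    rw [h1η, Real.rpow_inv_rpow (by linarith) hq.ne']
  set K := (1 + 1/η) ^ q with hKdef
  have hK : 0 ≤ K := Real.rpow_nonneg (by positivity) q
  refine ⟨2*K + 1, by linarith, fun x s t hx hs ht hxst => ?_⟩
  have hxq : 0 ≤ x ^ q := Real.rpow_nonneg hx q
  have hsq : 0 ≤ s ^ q := Real.rpow_nonneg hs q
  have htq : 0 ≤ t ^ q := Real.rpow_nonneg ht q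
  rw [abs_le] at hxst
  have hub1 : x ^ q ≤ (1 + δ₀) * s ^ q + K * t ^ q := by
    have h1 : x ^ q ≤ (s + t) ^ q := Real.rpow_le_rpow hx (by linarith) hq.le
    have h2 := aux_rpow_add_le q η s t hq.le hη hs ht
    rw [hpow, ← hKdef] at h2
    linarith
  have hub2 : s ^ q ≤ (1 + δ₀) * x ^ q + K * t ^ q := by
    have h1 : s ^ q ≤ (x + t) ^ q := Real.rpow_le_rpow hs (by linarith) hq.le
    have h2 := aux_rpow_add_le q η x t hq.le hη hx ht
    rw [hpow, ← hKdef] at h2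
    linarith
  rw [abs_le]
  constructor
  · nlinarith [mul_le_mul_of_nonneg_left hub1 hδ₀.le, mul_nonneg hδ₀.le hsq,
      mul_nonneg hδ₀.le htq, mul_nonneg (mul_nonneg hδ₀.le hδ₀.le) hsq,
      mul_nonneg hδ₀.le (mul_nonneg hK htq)]
  · nlinarith


/-- Brezis–Lieb lemma: if `0 < q < ∞`, `(f_n)` is uniformly bounded in
`L^q(ℝᵈ)` and `f_n → f` a.e. with `f ∈ L^q`, then
`∫ | |f_n|^q − |f_n − f|^q − |f|^q | dx → 0`. -/
theorem brezis_lieb (d : ℕ) (q : ℝ) (hq : 0 < q)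
    (f : ℕ → Euc d → ℂ) (g : Euc d → ℂ)
    (hmem : ∀ n, MemLp (f n) (ENNReal.ofReal q) (volume : Measure (Euc d)))
    (hg : MemLp g (ENNReal.ofReal q) (volume : Measure (Euc d)))
    (hbd : ∃ C : ℝ, ∀ n,
      eLpNorm (f n) (ENNReal.ofReal q) (volume : Measure (Euc d)) ≤ ENNReal.ofReal C)
    (hae : ∀ᵐ x ∂(volume : Measure (Euc d)), Tendsto (fun n => f n x) atTop (𝓝 (g x))) :
    Tendsto (fun n => ∫ x, |‖f n x‖ ^ q - ‖f n x - g x‖ ^ q - ‖g x‖ ^ q|)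
      atTop (𝓝 0) := by
  have hp0 : ENNReal.ofReal q ≠ 0 := by
    simp only [ne_eq, ENNReal.ofReal_eq_zero, not_le]; linarith
  have hpt : ENNReal.ofReal q ≠ ∞ := ENNReal.ofReal_ne_top
  have hqt : (ENNReal.ofReal q).toReal = q := ENNReal.toReal_ofReal hq.le
  obtain ⟨C₀, hC₀⟩ := hbd
  set C := max C₀ 0 with hCdef
  have hC : ∀ n, eLpNorm (f n) (ENNReal.ofReal q) volume ≤ ENNReal.ofReal C :=
    fun n => (hC₀ n).trans (ENNReal.ofReal_le_ofReal (le_max_left _ _))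
  -- integrability facts
  have Ig : Integrable (fun x => ‖g x‖ ^ q) (volume : Measure (Euc d)) := by
    simpa [hqt] using hg.integrable_norm_rpow hp0 hpt
  have Ifn : ∀ n, Integrable (fun x => ‖f n x‖ ^ q) (volume : Measure (Euc d)) := fun n => by
    simpa [hqt] using (hmem n).integrable_norm_rpow hp0 hpt
  have hsub : ∀ n, MemLp (fun x => f n x - g x) (ENNReal.ofReal q) (volume : Measure (Euc d)) :=
    fun n => (hmem n).sub hg
  have Isub : ∀ n, Integrable (fun x => ‖f n x - g x‖ ^ q) (volume : Measure (Euc d)) :=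
    fun n => by simpa [hqt] using (hsub n).integrable_norm_rpow hp0 hpt
  set φ := fun (n : ℕ) (x : Euc d) => |‖f n x‖ ^ q - ‖f n x - g x‖ ^ q - ‖g x‖ ^ q| with hφdef
  have Iφ : ∀ n, Integrable (φ n) (volume : Measure (Euc d)) :=
    fun n => (((Ifn n).sub (Isub n)).sub Ig).abs
  -- uniform bound on ∫ ‖f n - g‖^q
  set Kc : ℝ≥0∞ := ENNReal.LpAddConst (ENNReal.ofReal q) *
    (ENNReal.ofReal C + eLpNorm g (ENNReal.ofReal q) volume) with hKcdef
  have hKc : Kc ≠ ∞ :=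
    ENNReal.mul_ne_top (ENNReal.LpAddConst_lt_top _).ne
      (ENNReal.add_ne_top.2 ⟨ENNReal.ofReal_ne_top, hg.2.ne⟩)
  set M := Kc.toReal ^ q with hMdef
  have hM : 0 ≤ M := Real.rpow_nonneg ENNReal.toReal_nonneg q
  have hsubbd : ∀ n, (∫ x, ‖f n x - g x‖ ^ q) ≤ M := by
    intro n
    have h1 : eLpNorm (fun x => f n x - g x) (ENNReal.ofReal q) volume ≤ Kc := by
      refine (eLpNorm_sub_le' (hmem n).1 hg.1 _).trans ?_
      rw [hKcdef]
      gcongr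
      exact hC n
    have h2 := (hsub n).eLpNorm_eq_integral_rpow_norm hp0 hpt
    rw [h2, hqt] at h1
    have hint : 0 ≤ ∫ x, ‖f n x - g x‖ ^ q :=
      integral_nonneg fun x => Real.rpow_nonneg (norm_nonneg _) q
    rw [ENNReal.ofReal_le_iff_le_toReal hKc] at h1
    calc (∫ x, ‖f n x - g x‖ ^ q) = ((∫ x, ‖f n x - g x‖ ^ q) ^ q⁻¹) ^ q :=
          (Real.rpow_inv_rpow hint hq.ne').symm
      _ ≤ Kc.toReal ^ q := Real.rpow_le_rpow (Real.rpow_nonneg hint _) h1 hq.le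
  -- main ε-argument
  rw [Metric.tendsto_atTop]
  intro ε hε
  have hM1 : (0:ℝ) < M + 1 := by linarith
  set δ := ε / (2 * (M + 1)) with hδdef
  have hδ : 0 < δ := div_pos hε (by linarith)
  obtain ⟨Cδ, hCδ0, hCδ⟩ := aux_key q hq δ hδ
  set W := fun (n : ℕ) (x : Euc d) => max (φ n x - δ * ‖f n x - g x‖ ^ q) 0 with hWdef
  have hWbound : ∀ n x, W n x ≤ (Cδ + 1) * ‖g x‖ ^ q := by
    intro n x
    have hgq : 0 ≤ ‖g x‖ ^ q := Real.rpow_nonneg (norm_nonneg _) q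
    refine max_le ?_ (by positivity)
    have hnd : |‖f n x‖ - ‖f n x - g x‖| ≤ ‖g x‖ := by
      simpa using abs_norm_sub_norm_le (f n x) (f n x - g x)
    have hkey := hCδ ‖f n x‖ ‖f n x - g x‖ ‖g x‖ (norm_nonneg _) (norm_nonneg _)
      (norm_nonneg _) hnd
    have htri : φ n x ≤ |‖f n x‖ ^ q - ‖f n x - g x‖ ^ q| + |‖g x‖ ^ q| := by
      simp only [hφdef, sub_sub]
      calc |‖f n x‖ ^ q - (‖f n x - g x‖ ^ q + ‖g x‖ ^ q)|
          = |(‖f n x‖ ^ q - ‖f n x - g x‖ ^ q) - ‖g x‖ ^ q| := by ring_nf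
        _ ≤ |‖f n x‖ ^ q - ‖f n x - g x‖ ^ q| + |‖g x‖ ^ q| := abs_sub _ _
    rw [abs_of_nonneg hgq] at htri
    linarith
  have hWint : ∀ n, Integrable (W n) (volume : Measure (Euc d)) :=
    fun n => ((Iφ n).sub ((Isub n).const_mul δ)).pos_part
  have hWtendsto : Tendsto (fun n => ∫ x, W n x) atTop (𝓝 0) := by
    have h0 : (0:ℝ) = ∫ (_ : Euc d), (0:ℝ) := by simp
    rw [h0]
    refine tendsto_integral_of_dominated_convergence (fun x => (Cδ + 1) * ‖g x‖ ^ q)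
      (fun n => (hWint n).aestronglyMeasurable) (Ig.const_mul _) ?_ ?_
    · intro n
      filter_upwards with x
      rw [Real.norm_eq_abs, abs_of_nonneg (le_max_right _ _)]
      exact hWbound n x
    · filter_upwards [hae] with x hx
      have hcont : Continuous (fun t : ℝ => t ^ q) :=
        continuous_iff_continuousAt.2 fun y => Real.continuousAt_rpow_const y q (Or.inr hq.le)
      have h1 : Tendsto (fun n => ‖f n x‖ ^ q) atTop (𝓝 (‖g x‖ ^ q)) :=
        (hcont.tendsto _).comp hx.norm
      have h2 : Tendsto (fun n => ‖f n x - g x‖ ^ q) atTop (𝓝 0) := by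
        have h2a : Tendsto (fun n => f n x - g x) atTop (𝓝 0) := by
          simpa using hx.sub (tendsto_const_nhds (x := g x))
        have h2b := (hcont.tendsto _).comp h2a.norm
        simpa [Function.comp_def, Real.zero_rpow hq.ne'] using h2b
      have hφt : Tendsto (fun n => φ n x) atTop (𝓝 0) := by
        have h3 := ((h1.sub h2).sub (tendsto_const_nhds (x := ‖g x‖ ^ q))).abs
        simpa [hφdef] using h3
      have h4 := (hφt.sub (h2.const_mul δ)).max (tendsto_const_nhds (x := (0:ℝ)))
      simpa [hWdef] using h4
  obtain ⟨N, hN⟩ := Metric.tendsto_atTop.1 hWtendsto (ε/2) (by positivity)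
  refine ⟨N, fun n hn => ?_⟩
  have hWn := hN n hn
  rw [Real.dist_eq, sub_zero] at hWn
  have hWnn : 0 ≤ ∫ x, W n x := integral_nonneg fun x => le_max_right _ _
  rw [abs_of_nonneg hWnn] at hWn
  have hφle : (∫ x, φ n x) ≤ (∫ x, W n x) + δ * ∫ x, ‖f n x - g x‖ ^ q := by
    have hmono : (∫ x, φ n x) ≤ ∫ x, (W n x + δ * ‖f n x - g x‖ ^ q) := by
      refine integral_mono (Iφ n) ((hWint n).add ((Isub n).const_mul δ)) fun x => ?_
      have h5 : φ n x - δ * ‖f n x - g x‖ ^ q ≤ W n x := le_max_left _ _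
      simp only [Pi.add_apply]
      linarith
    rwa [integral_add (hWint n) ((Isub n).const_mul δ), integral_const_mul] at hmono
  have hδM : δ * (∫ x, ‖f n x - g x‖ ^ q) ≤ ε / 2 := by
    have h6 : δ * (M + 1) = ε / 2 := by
      rw [hδdef]; field_simp
    have h7 : δ * (∫ x, ‖f n x - g x‖ ^ q) ≤ δ * (M + 1) := by
      have := hsubbd n
      nlinarith
    linarith
  have hφnn : 0 ≤ ∫ x, φ n x := integral_nonneg fun x => abs_nonneg _
  show dist (∫ x, φ n x) 0 < ε
  rw [Real.dist_eq, sub_zero, abs_of_nonneg hφnn]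
  linarith
end
end
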